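/- arXiv:0910.4886 — 3 statements merged into one kernel-verified Lean document; each statement's English description precedes it below -/
import Mathlib

section
/- Let Γ be a finite connected simplicial graph with no SIL whose vertices are labeled by nontrivial cyclic groups, let G_Γ be the associated graph product, and let v, w be distinct non-adjacent vertices. Let C₀ be the connected component of Γ∖st(v) containing w and D₀ the connected component of Γ∖st(w) containing v. Then for any connected component C of Γ∖st(v) and any connected component D of Γ∖st(w), the partial conjugations π_{v,C} and π_{w,D} commute in Aut(G_Γ) unless C = C₀ and D = D₀. -/
open Monoid

namespace ArXiv

universe u uG

variable {V : Type u}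

/-- The star of a vertex: the vertex together with its neighbors. -/
def star (Γ : SimpleGraph V) (v : V) : Set V := insert v (Γ.neighborSet v)

/-- `C ⊆ V` is the vertex set of a connected component of the full subgraph of `Γ`
induced on `S`. -/
def IsCompOf (Γ : SimpleGraph V) (S : Set V) (C : Set V) : Prop :=
  ∃ c : (Γ.induce S).ConnectedComponent, C = Subtype.val '' c.supp

/-- `Γ` has a separating intersection of links: there are distinct non-adjacent vertices
`v, w` such that some connected component of `Γ ∖ (lk(v) ∩ lk(w))` contains neither `v`
nor `w`. -/
def HasSIL (Γ : SimpleGraph V) : Prop :=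
  ∃ v w : V, v ≠ w ∧ ¬ Γ.Adj v w ∧
    ∃ C : Set V, IsCompOf Γ ((Γ.neighborSet v ∩ Γ.neighborSet w)ᶜ) C ∧ v ∉ C ∧ w ∉ C

variable (Γ : SimpleGraph V) (G : V → Type uG) [∀ v, Group (G v)]

/-- The commutator relators defining the graph product. -/
def rels : Set (Monoid.CoprodI G) :=
  {x | ∃ (v w : V) (_ : Γ.Adj v w) (g : G v) (h : G w),
    x = CoprodI.of g * CoprodI.of h * (CoprodI.of g)⁻¹ * (CoprodI.of h)⁻¹}

/-- The graph product of the vertex groups `G v` over the graph `Γ`: the quotient of the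
free product by the normal closure of the commutators of adjacent vertex groups. -/
def GraphProduct : Type (max u uG) :=
  Monoid.CoprodI G ⧸ Subgroup.normalClosure (rels Γ G)

instance : Group (GraphProduct Γ G) :=
  inferInstanceAs (Group (Monoid.CoprodI G ⧸ Subgroup.normalClosure (rels Γ G)))

/-- The canonical map from a vertex group into the graph product. -/
def of {v : V} : G v →* GraphProduct Γ G :=
  (QuotientGroup.mk' (Subgroup.normalClosure (rels Γ G))).comp CoprodI.of

theorem of_commute {v w : V} (h : Γ.Adj v w) (g : G v) (k : G w) :
    Commute (of Γ G g) (of Γ G k) := by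
  rw [← commutatorElement_eq_one_iff_commute]
  have hmem : (CoprodI.of g * CoprodI.of k * (CoprodI.of g)⁻¹ * (CoprodI.of k)⁻¹ :
      Monoid.CoprodI G) ∈ Subgroup.normalClosure (rels Γ G) :=
    Subgroup.subset_normalClosure ⟨v, w, h, g, k, rfl⟩
  have h1 : (QuotientGroup.mk' (Subgroup.normalClosure (rels Γ G)))
      (CoprodI.of g * CoprodI.of k * (CoprodI.of g)⁻¹ * (CoprodI.of k)⁻¹) = 1 :=
    (QuotientGroup.eq_one_iff _).mpr hmem
  simp only [map_mul, map_inv] at h1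
  rw [commutatorElement_def]
  exact h1

/-- `π` is the partial conjugation `π_{v,C}`, for vertex groups with chosen generators
`gen`: it conjugates the generators in `C` by (the generator of) `v` and fixes all other
generators. -/
def IsPartialConj (gen : ∀ v, G v) (π : MulAut (GraphProduct Γ G)) (v : V) (C : Set V) :
    Prop :=
  (∀ u ∈ C, ∀ g : G u, π (of Γ G g) = of Γ G (gen v) * of Γ G g * (of Γ G (gen v))⁻¹) ∧
  (∀ u ∉ C, ∀ g : G u, π (of Γ G g) = of Γ G g)

/-- `π` is the partial conjugation `π_{a,C}` by the element `a` of the vertex group `G v`: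
it conjugates the vertex groups in `C` by `a` and fixes all other vertex groups. -/
def IsPartialConjBy {v : V} (a : G v) (π : MulAut (GraphProduct Γ G)) (C : Set V) : Prop :=
  (∀ u ∈ C, ∀ g : G u, π (of Γ G g) = of Γ G a * of Γ G g * (of Γ G a)⁻¹) ∧
  (∀ u ∉ C, ∀ g : G u, π (of Γ G g) = of Γ G g)

/-- The vertex set of the graph `Γ̃`: pairs `p_{v,C}` where `C` is a connected component
of `Γ ∖ st(v)`. -/
def TV : Type u := {p : V × Set V // IsCompOf Γ ((star Γ p.1)ᶜ) p.2}

/-- The graph `Γ̃`: vertices `p_{v,C}` and `p_{w,D}` are joined by an edge unless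
`v, w` are distinct non-adjacent vertices with `v ∈ D` and `w ∈ C`. -/
def tilde : SimpleGraph (TV Γ) where
  Adj p q := p ≠ q ∧
    ¬(p.1.1 ≠ q.1.1 ∧ ¬ Γ.Adj p.1.1 q.1.1 ∧ p.1.1 ∈ q.1.2 ∧ q.1.1 ∈ p.1.2)
  symm := by
    constructor
    rintro p q ⟨h1, h2⟩
    exact ⟨h1.symm, fun ⟨a, b, c, d⟩ => h2 ⟨a.symm, fun e => b e.symm, d, c⟩⟩
  loopless := ⟨fun p h => h.1 rfl⟩

/-- The graph product `G_{Γ̃}`, where the vertex `p_{v,C}` is labeled by (a copy of) the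
group `G v`. -/
abbrev TildeProduct : Type (max u uG) :=
  GraphProduct (tilde Γ) (fun p : TV Γ => G p.1.1)

/-- The element `p_v = ∏_C p_{v,C} ∈ G_{Γ̃}`, the product over all connected components
`C` of `Γ ∖ st(v)` (the factors pairwise commute). -/
noncomputable def pvert [Finite V] (gen : ∀ v, G v) (v : V) : TildeProduct Γ G :=
  haveI : Fintype {C : Set V // IsCompOf Γ ((star Γ v)ᶜ) C} := Fintype.ofFinite _
  Finset.noncommProd (Finset.univ : Finset {C : Set V // IsCompOf Γ ((star Γ v)ᶜ) C})
    (fun c => of (tilde Γ) (fun p : TV Γ => G p.1.1) (v := ⟨(v, c.1), c.2⟩) (gen v))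
    (by
      intro a _ b _ hab
      have hadj : (tilde Γ).Adj ⟨(v, a.1), a.2⟩ ⟨(v, b.1), b.2⟩ := by
        refine ⟨fun h => hab (Subtype.ext (congrArg (fun x : TV Γ => x.1.2) h)), ?_⟩
        rintro ⟨hne, -⟩
        exact hne rfl
      exact of_commute (tilde Γ) (fun p : TV Γ => G p.1.1) hadj (gen v) (gen v))

/-- The set `Δ` of vertices adjacent to every other vertex of `Γ`. -/
def Delta (Γ : SimpleGraph V) : Set V := {v | ∀ u, u ≠ v → Γ.Adj v u}

/-- The subgroup of the graph product generated by the vertex groups `G v`, `v ∈ T`. -/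
def vertexSubgroup (T : Set V) : Subgroup (GraphProduct Γ G) :=
  Subgroup.closure {x | ∃ v ∈ T, ∃ g : G v, x = of Γ G g}

/-- `w` is a reduced word for the element `g` of the graph product: a minimal length
expression of `g` as a product of nontrivial elements of vertex groups. -/
def IsReducedWord (g : GraphProduct Γ G) (w : List (Σ v : V, G v)) : Prop :=
  (w.map fun l => of Γ G l.2).prod = g ∧ (∀ l ∈ w, l.2 ≠ 1) ∧
    ∀ w' : List (Σ v : V, G v), (w'.map fun l => of Γ G l.2).prod = g →
      w.length ≤ w'.length

section Aux

variable {Γ₀ : SimpleGraph V} {S C C' : Set V}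

lemma IsCompOf.subset (h : IsCompOf Γ₀ S C) : C ⊆ S := by
  obtain ⟨c, rfl⟩ := h
  rintro x ⟨y, -, rfl⟩
  exact y.2

lemma IsCompOf.nonempty (h : IsCompOf Γ₀ S C) : C.Nonempty := by
  obtain ⟨c, rfl⟩ := h
  obtain ⟨y, hy⟩ := c.exists_rep
  exact ⟨y.val, y, (SimpleGraph.ConnectedComponent.mem_supp_iff _ _).mpr hy, rfl⟩

lemma IsCompOf.mem_of_adj (h : IsCompOf Γ₀ S C) {x y : V} (hx : x ∈ C) (hy : y ∈ S)
    (hxy : Γ₀.Adj x y) : y ∈ C := by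
  obtain ⟨c, rfl⟩ := h
  obtain ⟨x', hx', hxx⟩ := hx
  refine ⟨⟨y, hy⟩, ?_, rfl⟩
  rw [SimpleGraph.ConnectedComponent.mem_supp_iff] at hx' ⊢
  rw [← hx']
  refine SimpleGraph.ConnectedComponent.sound (SimpleGraph.Adj.reachable ?_)
  show (Γ₀.induce S).Adj ⟨y, hy⟩ x'
  simpa [hxx] using hxy.symm

lemma IsCompOf.eq_of_mem (h : IsCompOf Γ₀ S C) (h' : IsCompOf Γ₀ S C') {x : V}
    (hx : x ∈ C) (hx' : x ∈ C') : C = C' := by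
  obtain ⟨c, rfl⟩ := h
  obtain ⟨c', rfl⟩ := h'
  obtain ⟨x₁, h₁, e₁⟩ := hx
  obtain ⟨x₂, h₂, e₂⟩ := hx'
  have : x₁ = x₂ := Subtype.ext (e₁.trans e₂.symm)
  subst this
  rw [SimpleGraph.ConnectedComponent.mem_supp_iff] at h₁ h₂
  rw [← h₁, ← h₂]

lemma IsCompOf.reachable (h : IsCompOf Γ₀ S C) {x y : V} (hx : x ∈ C) (hy : y ∈ C)
    (hxS : x ∈ S) (hyS : y ∈ S) : (Γ₀.induce S).Reachable ⟨x, hxS⟩ ⟨y, hyS⟩ := by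
  obtain ⟨c, rfl⟩ := h
  obtain ⟨x₁, h₁, e₁⟩ := hx
  obtain ⟨y₁, h₂, e₂⟩ := hy
  rw [SimpleGraph.ConnectedComponent.mem_supp_iff] at h₁ h₂
  have ex : (⟨x, hxS⟩ : ↥S) = x₁ := Subtype.ext e₁.symm
  have ey : (⟨y, hyS⟩ : ↥S) = y₁ := Subtype.ext e₂.symm
  rw [ex, ey]
  exact SimpleGraph.ConnectedComponent.exact (h₁.trans h₂.symm)

/-- Walks in the induced subgraph on `S` starting in a component `C ⊆ T` transfer to
reachability in the induced subgraph on `T`. -/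
lemma IsCompOf.walk_transfer {T : Set V} (hC : IsCompOf Γ₀ S C) (hCT : C ⊆ T) :
    ∀ {a b : ↥S} (_ : (Γ₀.induce S).Walk a b) (ha : a.val ∈ C) (hb : b.val ∈ C),
      (Γ₀.induce T).Reachable ⟨a.val, hCT ha⟩ ⟨b.val, hCT hb⟩ := by
  intro a b p
  induction p with
  | nil => intro ha hb; exact SimpleGraph.Reachable.refl _
  | @cons x y z hxy p ih =>
    intro ha hb
    have hyC : y.val ∈ C := hC.mem_of_adj ha y.2 (by simpa using hxy)
    refine (SimpleGraph.Adj.reachable ?_).trans (ih hyC hb)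
    show (Γ₀.induce T).Adj ⟨x.val, hCT ha⟩ ⟨y.val, hCT hyC⟩
    simpa using hxy

/-- A connected component of the induced subgraph on `S` whose vertex set lies in `T`
is contained in a single connected component of the induced subgraph on `T`. -/
lemma IsCompOf.exists_comp_subset {T : Set V} (hC : IsCompOf Γ₀ S C) (hCT : C ⊆ T) :
    ∃ D, IsCompOf Γ₀ T D ∧ C ⊆ D := by
  obtain ⟨u₀, hu₀⟩ := hC.nonempty
  refine ⟨Subtype.val '' ((Γ₀.induce T).connectedComponentMk ⟨u₀, hCT hu₀⟩).supp,
    ⟨_, rfl⟩, ?_⟩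
  intro x hx
  refine ⟨⟨x, hCT hx⟩, ?_, rfl⟩
  rw [SimpleGraph.ConnectedComponent.mem_supp_iff]
  apply SimpleGraph.ConnectedComponent.sound
  obtain ⟨p⟩ := hC.reachable hx hu₀ (hC.subset hx) (hC.subset hu₀)
  exact hC.walk_transfer hCT p hx hu₀

lemma IsCompOf.not_mem_center {v : V} (h : IsCompOf Γ₀ ((star Γ₀ v)ᶜ) C) : v ∉ C :=
  fun hv => Set.notMem_of_mem_compl (h.subset hv) (Set.mem_insert _ _)

/-- There is no walk in `Γ ∖ (lk v ∩ lk w)` from the component `C` to `v` or `w`,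
assuming `w ∉ C` and `v` is not in the component `D'` of `Γ ∖ st w` containing `C`. -/
lemma no_walk {Γ₀ : SimpleGraph V} {v w : V} {C D' : Set V}
    (hvw : v ≠ w) (hadj : ¬ Γ₀.Adj v w)
    (hC : IsCompOf Γ₀ ((star Γ₀ v)ᶜ) C) (hwC : w ∉ C)
    (hD' : IsCompOf Γ₀ ((star Γ₀ w)ᶜ) D') (hCD' : C ⊆ D') (hvD' : v ∉ D') :
    ∀ {a b : ↥((Γ₀.neighborSet v ∩ Γ₀.neighborSet w)ᶜ)}
      (_ : (Γ₀.induce ((Γ₀.neighborSet v ∩ Γ₀.neighborSet w)ᶜ)).Walk a b),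
      a.val ∈ C → (b.val = v ∨ b.val = w) → False := by
  have hvSw : v ∈ (star Γ₀ w)ᶜ := by
    intro hmem
    rcases hmem with h | h
    · exact hvw h
    · exact hadj (Γ₀.adj_symm h)
  intro a b p
  induction p with
  | nil =>
    intro ha hb
    rcases hb with hb | hb
    · exact hC.not_mem_center (hb ▸ ha)
    · exact hwC (hb ▸ ha)
  | @cons x y z hxy p ih =>
    intro ha hb
    have hxyΓ : Γ₀.Adj x.val y.val := by simpa using hxy
    by_cases hyv : y.val ∈ star Γ₀ v
    · rcases hyv with hy | hy
      · -- y = v : then x is adjacent to v, contradicting x ∈ C ⊆ (st v)ᶜ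
        have hxv : Γ₀.Adj v x.val := by
          have h' := hxyΓ
          rw [hy] at h'
          exact h'.symm
        exact Set.notMem_of_mem_compl (hC.subset ha) (Set.mem_insert_of_mem _ hxv)
      · -- y ∈ lk v : then y ∉ st w, so y ∈ D' and then v ∈ D', contradiction
        have hyw : y.val ∈ (star Γ₀ w)ᶜ := by
          intro hmem
          rcases hmem with h | h
          · exact hadj (h ▸ hy)
          · exact y.2 ⟨hy, h⟩
        have hyD' : y.val ∈ D' := hD'.mem_of_adj (hCD' ha) hyw hxyΓ
        exact hvD' (hD'.mem_of_adj hyD' hvSw (Γ₀.adj_symm hy))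
    · -- y ∉ st v : y stays in C
      exact ih (hC.mem_of_adj ha hyv hxyΓ) hb

/-- Key combinatorial lemma: in a graph with no SIL, if `C` is a component of
`Γ ∖ st v` not containing `w` and `D'` is the component of `Γ ∖ st w` containing `C`,
then `v ∈ D'`. -/
lemma key_lemma {Γ₀ : SimpleGraph V} (hsil : ¬ HasSIL Γ₀) {v w : V} {C D' : Set V}
    (hvw : v ≠ w) (hadj : ¬ Γ₀.Adj v w)
    (hC : IsCompOf Γ₀ ((star Γ₀ v)ᶜ) C) (hwC : w ∉ C)
    (hD' : IsCompOf Γ₀ ((star Γ₀ w)ᶜ) D') (hCD' : C ⊆ D') : v ∈ D' := by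
  by_contra hvD'
  obtain ⟨u₀, hu₀⟩ := hC.nonempty
  have hu₀L : u₀ ∈ (Γ₀.neighborSet v ∩ Γ₀.neighborSet w)ᶜ :=
    fun hmem => Set.notMem_of_mem_compl (hC.subset hu₀) (Set.mem_insert_of_mem _ hmem.1)
  set L := (Γ₀.neighborSet v ∩ Γ₀.neighborSet w)ᶜ with hLdef
  set E := Subtype.val '' ((Γ₀.induce L).connectedComponentMk ⟨u₀, hu₀L⟩).supp with hEdef
  have hEcomp : IsCompOf Γ₀ L E := ⟨_, rfl⟩
  have hvwE : v ∈ E ∨ w ∈ E := by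
    by_contra hcon
    push_neg at hcon
    exact hsil ⟨v, w, hvw, hadj, E, hEcomp, hcon.1, hcon.2⟩
  rcases hvwE with hv | hw
  · obtain ⟨x', hx', e⟩ := hv
    rw [SimpleGraph.ConnectedComponent.mem_supp_iff] at hx'
    obtain ⟨p⟩ := SimpleGraph.ConnectedComponent.exact hx'
    exact no_walk hvw hadj hC hwC hD' hCD' hvD' p.reverse hu₀ (Or.inl e)
  · obtain ⟨x', hx', e⟩ := hw
    rw [SimpleGraph.ConnectedComponent.mem_supp_iff] at hx'
    obtain ⟨p⟩ := SimpleGraph.ConnectedComponent.exact hx'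
    exact no_walk hvw hadj hC hwC hD' hCD' hvD' p.reverse hu₀ (Or.inr e)

end Aux

/-- The algebraic half: two partial conjugations commute whenever the components
are in one of the two "good" configurations. -/
lemma commute_of_config {V : Type u} (Γ : SimpleGraph V) (G : V → Type uG)
    [∀ v, Group (G v)] (gen : ∀ v, G v) (v w : V) (C D : Set V)
    (hwC : w ∉ C)
    (hcase : (v ∈ D ∧ C ⊆ D) ∨ (v ∉ D ∧ ∀ x ∈ C, x ∉ D))
    (π₁ π₂ : MulAut (GraphProduct Γ G))
    (hπ₁ : IsPartialConj Γ G gen π₁ v C) (hπ₂ : IsPartialConj Γ G gen π₂ w D) :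
    Commute π₁ π₂ := by
  obtain ⟨A1, A2⟩ := hπ₁
  obtain ⟨B1, B2⟩ := hπ₂
  have keyg : ∀ (u : V) (g : G u), π₁ (π₂ (of Γ G g)) = π₂ (π₁ (of Γ G g)) := by
    intro u g
    rcases hcase with ⟨hvD, hCD⟩ | ⟨hvD, hdisj⟩
    · by_cases huC : u ∈ C
      · have huD : u ∈ D := hCD huC
        simp only [map_mul, map_inv, A1 u huC, A2 w hwC, B1 u huD, B1 v hvD]
        group
      · by_cases huD : u ∈ D
        · simp only [map_mul, map_inv, A2 u huC, A2 w hwC, B1 u huD]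
        · simp only [A2 u huC, B2 u huD]
    · by_cases huC : u ∈ C
      · have huD : u ∉ D := hdisj u huC
        simp only [map_mul, map_inv, A1 u huC, B2 u huD, B2 v hvD]
      · by_cases huD : u ∈ D
        · simp only [map_mul, map_inv, B1 u huD, A2 u huC, A2 w hwC]
        · simp only [A2 u huC, B2 u huD]
  have h12 : ((π₁.toMonoidHom.comp π₂.toMonoidHom).comp
        (QuotientGroup.mk' (Subgroup.normalClosure (rels Γ G)))) =
      ((π₂.toMonoidHom.comp π₁.toMonoidHom).comp
        (QuotientGroup.mk' (Subgroup.normalClosure (rels Γ G)))) := by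
    apply Monoid.CoprodI.ext_hom
    intro i
    ext g
    exact keyg i g
  show π₁ * π₂ = π₂ * π₁
  refine MulEquiv.ext fun x => ?_
  rw [MulAut.mul_apply, MulAut.mul_apply]
  obtain ⟨y, rfl⟩ := QuotientGroup.mk'_surjective (Subgroup.normalClosure (rels Γ G)) x
  exact DFunLike.congr_fun h12 y

/-- In a finite connected graph with no SIL, the partial conjugations
`π_{v,C}` and `π_{w,D}` commute unless `C = C₀` and `D = D₀`. -/
theorem partialConj_commute {V : Type u} [Finite V] (Γ : SimpleGraph V)
    (hconn : Γ.Connected) (hsil : ¬ HasSIL Γ)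
    (G : V → Type uG) [∀ v, Group (G v)] [∀ v, Nontrivial (G v)]
    (gen : ∀ v, G v) (hgen : ∀ v, Subgroup.zpowers (gen v) = ⊤)
    (v w : V) (hvw : v ≠ w) (hadj : ¬ Γ.Adj v w)
    (C₀ D₀ : Set V)
    (hC₀ : IsCompOf Γ ((star Γ v)ᶜ) C₀) (hwC₀ : w ∈ C₀)
    (hD₀ : IsCompOf Γ ((star Γ w)ᶜ) D₀) (hvD₀ : v ∈ D₀)
    (C D : Set V) (hC : IsCompOf Γ ((star Γ v)ᶜ) C) (hD : IsCompOf Γ ((star Γ w)ᶜ) D)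
    (hne : ¬ (C = C₀ ∧ D = D₀))
    (π₁ π₂ : MulAut (GraphProduct Γ G))
    (hπ₁ : IsPartialConj Γ G gen π₁ v C) (hπ₂ : IsPartialConj Γ G gen π₂ w D) :
    Commute π₁ π₂ := by
  clear hconn hgen
  have hwSv : w ∈ (star Γ v)ᶜ := by
    intro hmem
    rcases hmem with h | h
    · exact hvw h.symm
    · exact hadj h
  have hvSw : v ∈ (star Γ w)ᶜ := by
    intro hmem
    rcases hmem with h | h
    · exact hvw h
    · exact hadj (Γ.adj_symm h)
  by_cases hwC : w ∈ C
  · -- then C = C₀ and hence D ≠ D₀, so v ∉ D; apply the symmetric argument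
    have hCC₀ : C = C₀ := hC.eq_of_mem hC₀ hwC hwC₀
    have hvD : v ∉ D := fun hv => hne ⟨hCC₀, hD.eq_of_mem hD₀ hv hvD₀⟩
    have hDv : D ⊆ (star Γ v)ᶜ := by
      intro x hx hmem
      rcases hmem with h | h
      · exact hvD (h ▸ hx)
      · exact hvD (hD.mem_of_adj hx hvSw (Γ.adj_symm h))
    obtain ⟨C', hC', hDC'⟩ := hD.exists_comp_subset hDv
    have hwC' : w ∈ C' :=
      key_lemma hsil hvw.symm (fun h => hadj h.symm) hD hvD hC' hDC'
    have hC'C : C' = C := hC'.eq_of_mem hC hwC' hwC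
    exact (commute_of_config Γ G gen w v D C hvD
      (Or.inl ⟨hwC, hC'C ▸ hDC'⟩) π₂ π₁ hπ₂ hπ₁).symm
  · -- w ∉ C: let D' be the component of Γ ∖ st w containing C; then v ∈ D' = D₀
    have hCw : C ⊆ (star Γ w)ᶜ := by
      intro x hx hmem
      rcases hmem with h | h
      · exact hwC (h ▸ hx)
      · exact hwC (hC.mem_of_adj hx hwSv (Γ.adj_symm h))
    obtain ⟨D', hD', hCD'⟩ := hC.exists_comp_subset hCw
    have hvD' : v ∈ D' := key_lemma hsil hvw hadj hC hwC hD' hCD'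
    have hD'D₀ : D' = D₀ := hD'.eq_of_mem hD₀ hvD' hvD₀
    by_cases hDD₀ : D = D₀
    · exact commute_of_config Γ G gen v w C D hwC
        (Or.inl ⟨hDD₀ ▸ hvD₀, by rw [hDD₀, ← hD'D₀]; exact hCD'⟩) π₁ π₂ hπ₁ hπ₂
    · have hvD : v ∉ D := fun h => hDD₀ (hD.eq_of_mem hD₀ h hvD₀)
      have hdisj : ∀ x ∈ C, x ∉ D := fun x hx hxD =>
        hDD₀ ((hD.eq_of_mem hD' hxD (hCD' hx)).trans hD'D₀)
      exact commute_of_config Γ G gen v w C D hwC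
        (Or.inr ⟨hvD, hdisj⟩) π₁ π₂ hπ₁ hπ₂

end ArXiv
end

section
/- Let Γ be a finite simplicial graph whose vertices are labeled by nontrivial cyclic groups and let G_Γ be the associated graph product. If Γ has a SIL, then there exist two partial conjugations of G_Γ whose commutator is not an inner automorphism of G_Γ; in particular Out^pc(G_Γ) is not abelian. -/
open Monoid
open scoped commutatorElement

namespace SILAux

open Monoid Monoid.CoprodI Monoid.CoprodI.Word

section CoprodILemmas

variable {ι : Type*} {M : ι → Type*} [∀ i, Group (M i)]
variable [DecidableEq ι] [∀ i, DecidableEq (M i)]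



lemma prod_equiv (x : CoprodI M) : (Word.equiv x : Word M).prod = x := by
  have := (Word.equiv (M := M)).symm_apply_apply x
  simpa [Word.equiv] using this

lemma equiv_prod (w : Word M) : Word.equiv (w.prod) = w := by
  have := (Word.equiv (M := M)).apply_symm_apply w
  simpa [Word.equiv] using this

lemma equiv_mul (x y : CoprodI M) : Word.equiv (x * y) = x • (Word.equiv y : Word M) := by
  have h1 : Word.equiv (x * y) = (x * y) • (Word.empty : Word M) := rfl
  have h2 : Word.equiv y = y • (Word.empty : Word M) := rfl
  rw [h1, h2, mul_smul]

-- S6 : decomposition of a word with known first index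
lemma word_decomp {i : ι} {W : Word M} (h : W.fstIdx = some i) :
    (equivPair i W).head ≠ 1 ∧
      W.toList = ⟨i, (equivPair i W).head⟩ :: (equivPair i W).tail.toList := by
  have hW : rcons (equivPair i W) = W := (equivPair i).symm_apply_apply W
  have hne : (equivPair i W).head ≠ 1 := by
    intro h1
    rw [rcons, dif_pos h1] at hW
    rw [← hW] at h
    exact (equivPair i W).fstIdx_ne h
  refine ⟨hne, ?_⟩
  conv_lhs => rw [← hW]
  rw [rcons, dif_neg hne]
  rfl

lemma rcons_length {i : ι} (p : Pair M i) :
    (rcons p).toList.length ≤ p.tail.toList.length + 1 := by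
  rw [rcons]
  split_ifs <;> simp [cons]

lemma tail_length_le {i : ι} (W : Word M) :
    (equivPair i W).tail.toList.length ≤ W.toList.length := by
  by_cases h : W.fstIdx = some i
  · rw [(word_decomp h).2]; simp
  · rw [equivPair_eq_of_fstIdx_ne h]

-- S1
lemma of_smul_toList_of_ne {i : ι} {m : M i} (hm : m ≠ 1) {W : Word M}
    (h : W.fstIdx ≠ some i) :
    (of m • W).toList = ⟨i, m⟩ :: W.toList := by
  rw [← cons_eq_smul (h1 := h) (h2 := hm)]
  rfl

-- S2
lemma of_smul_length_le {i : ι} (m : M i) (W : Word M) :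
    (of m • W).toList.length ≤ W.toList.length + 1 := by
  rw [of_smul_def]
  exact le_trans (rcons_length _) (Nat.add_le_add_right (tail_length_le W) 1)

-- S5
lemma of_smul_length_le_of_eq {i : ι} (m : M i) {W : Word M} (h : W.fstIdx = some i) :
    (of m • W).toList.length ≤ W.toList.length := by
  rw [of_smul_def]
  refine le_trans (rcons_length _) ?_
  have h2 := (word_decomp h).2
  simp only [h2, List.length_cons]
  exact le_rfl

-- S4 subadditivity
lemma prod_smul_length_le (w : Word M) : ∀ (W : Word M),
    (w.prod • W).toList.length ≤ w.toList.length + W.toList.length := by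
  induction w using consRecOn with
  | empty => intro W; simp
  | cons i m w h1 h2 ih =>
    intro W
    rw [prod_cons, mul_smul]
    refine le_trans (of_smul_length_le _ _) ?_
    have h3 := ih W
    have hc : (cons m w h1 h2).toList.length = w.toList.length + 1 := rfl
    omega

lemma equiv_mul_length_le (x y : CoprodI M) :
    (Word.equiv (x * y)).toList.length ≤
      (Word.equiv x).toList.length + (Word.equiv y).toList.length := by
  rw [equiv_mul]
  conv_lhs => rw [← prod_equiv x]
  exact prod_smul_length_le _ _

lemma equiv_of_length_le {i : ι} (m : M i) :
    (Word.equiv (of m : CoprodI M)).toList.length ≤ 1 := by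
  have : Word.equiv (of m : CoprodI M) = of m • Word.empty := rfl
  rw [this]
  simpa using of_smul_length_le m Word.empty

lemma eq_one_of_equiv_empty {x : CoprodI M} (h : (Word.equiv x).toList = []) : x = 1 := by
  have h2 : Word.equiv x = Word.empty := Word.ext h
  calc x = (Word.equiv x).prod := (prod_equiv x).symm
    _ = (Word.empty : Word M).prod := by rw [h2]
    _ = 1 := prod_empty


lemma conj_letter_aux : ∀ (n : ℕ) (s : CoprodI M), (Word.equiv s).toList.length ≤ n →
    ∀ {i : ι} (a a' : M i), a ≠ 1 → s * of a = of a' * s → ∃ m : M i, s = of m := by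
  intro n
  induction n with
  | zero =>
    intro s hs i a a' _ _
    refine ⟨1, ?_⟩
    rw [map_one, eq_one_of_equiv_empty (List.eq_nil_of_length_eq_zero
      (Nat.le_zero.mp hs))]
  | succ n ih =>
    intro s hs i a a' ha heq
    rcases hl : (Word.equiv s).toList with _ | ⟨⟨k, x0⟩, rest⟩
    · exact ⟨1, by rw [map_one, eq_one_of_equiv_empty hl]⟩
    have hfst : (Word.equiv s).fstIdx = some k := by rw [fstIdx, hl]; rfl
    obtain ⟨hhead, hdec⟩ := word_decomp hfst
    set p := equivPair k (Word.equiv s) with hp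
    set x := p.head with hx
    set s' := p.tail.prod with hs'
    have hrc : rcons p = Word.equiv s := (equivPair k).symm_apply_apply (Word.equiv s)
    have hsplit : s = of x * s' := by
      conv_lhs => rw [← prod_equiv s, ← hrc]
      exact prod_rcons p
    have hes' : Word.equiv s' = p.tail := equiv_prod p.tail
    have hlen' : p.tail.toList.length ≤ n := by
      have h1 : (Word.equiv s).toList.length ≤ n + 1 := hs
      rw [hdec, List.length_cons] at h1
      omega
    by_cases hk : k = i
    · subst hk
      have heq' : s' * of a = of (x⁻¹ * (a' * x)) * s' := by
        have h2 : of x * (s' * of a) = of x * (of (x⁻¹ * (a' * x)) * s') := by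
          calc of x * (s' * of a) = (of x * s') * of a := by rw [mul_assoc]
            _ = of a' * (of x * s') := by rw [← hsplit, heq, hsplit]
            _ = of (a' * x) * s' := by rw [map_mul, mul_assoc]
            _ = of x * (of (x⁻¹ * (a' * x)) * s') := by
                rw [← mul_assoc, ← map_mul, mul_inv_cancel_left]
        exact mul_left_cancel h2
      obtain ⟨m, hm⟩ := ih s' (by rw [hes']; exact hlen') a _ ha heq'
      exact ⟨x * m, by rw [hsplit, hm, map_mul]⟩
    · exfalso
      have ha' : a' ≠ 1 := by
        rintro rfl
        apply ha
        rw [map_one, one_mul] at heq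
        have h3 : s * of a = s * 1 := by rw [heq, mul_one]
        exact of_injective i (by rw [mul_left_cancel h3, map_one])
      have hR : (Word.equiv (of a' * s)).toList = ⟨i, a'⟩ :: (Word.equiv s).toList := by
        rw [equiv_mul]
        refine of_smul_toList_of_ne ha' ?_
        rw [hfst]
        exact fun hcon => hk (Option.some_injective _ hcon)
      set V := Word.equiv (s' * of a) with hV
      have hLsplit : Word.equiv (s * of a) = of x • V := by
        rw [hsplit, mul_assoc, equiv_mul]
      have hVlen : V.toList.length ≤ p.tail.toList.length + 1 := by
        refine le_trans (equiv_mul_length_le s' (of a)) ?_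
        rw [hes']
        exact Nat.add_le_add_left (equiv_of_length_le a) _
      have h3 : (Word.equiv s).toList.length = p.tail.toList.length + 1 := by
        rw [hdec, List.length_cons]
      by_cases hfV : V.fstIdx = some k
      · have h1 : (Word.equiv (s * of a)).toList.length ≤ V.toList.length := by
          rw [hLsplit]
          exact of_smul_length_le_of_eq x hfV
        rw [heq, hR, List.length_cons] at h1
        omega
      · have hL : (Word.equiv (s * of a)).toList = ⟨k, x⟩ :: V.toList := by
          rw [hLsplit]
          exact of_smul_toList_of_ne hhead hfV
        rw [heq, hR] at hL
        have h4 : (⟨i, a'⟩ : Σ j, M j) = ⟨k, x⟩ := (List.cons.injEq _ _ _ _).mp hL |>.1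
        exact hk (congrArg Sigma.fst h4).symm

lemma conj_letter {i : ι} (a a' : M i) (ha : a ≠ 1) (s : CoprodI M)
    (hs : s * of a = of a' * s) : ∃ m : M i, s = of m :=
  conj_letter_aux (Word.equiv s).toList.length s le_rfl a a' ha hs

lemma of_eq_of_ne_idx {i j : ι} (hij : i ≠ j) {x : M i} {y : M j}
    (h : (of x : CoprodI M) = of y) : x = 1 := by
  by_contra hx
  have hlx : (Word.equiv (of x : CoprodI M)).toList = [⟨i, x⟩] := by
    have h0 : Word.equiv (of x : CoprodI M) = of x • (Word.empty : Word M) := rfl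
    rw [h0, of_smul_toList_of_ne hx (by simp [fstIdx, Word.empty])]
    rfl
  by_cases hy : y = 1
  · subst hy
    rw [map_one] at h
    have := eq_one_of_equiv_empty (x := (of x : CoprodI M))
    rw [h] at hlx
    have h1 : (Word.equiv (1 : CoprodI M)).toList = ([] : List (Σ j, M j)) := by
      have : Word.equiv (1 : CoprodI M) = (1 : CoprodI M) • Word.empty := rfl
      rw [this, one_smul]
      rfl
    rw [h1] at hlx
    exact List.cons_ne_nil _ _ hlx.symm
  · have hly : (Word.equiv (of y : CoprodI M)).toList = [⟨j, y⟩] := by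
      have h0 : Word.equiv (of y : CoprodI M) = of y • (Word.empty : Word M) := rfl
      rw [h0, of_smul_toList_of_ne hy (by simp [fstIdx, Word.empty])]
      rfl
    rw [h, hly] at hlx
    have h4 : (⟨j, y⟩ : Σ j, M j) = ⟨i, x⟩ := (List.cons.injEq _ _ _ _).mp hlx |>.1
    exact hij (congrArg Sigma.fst h4).symm

/-- The key free-product contradiction. -/
lemma coprodI_contradiction {i j k : ι} (hij : i ≠ j) (hik : i ≠ k) (hjk : j ≠ k)
    {a : M i} {b : M j} {c : M k} (ha : a ≠ 1) (hb : b ≠ 1) (hc : c ≠ 1)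
    (t : CoprodI M) (hta : t * of a = of a * t) (htb : t * of b = of b * t)
    (htc : (t⁻¹ * (of b * (of a)⁻¹ * (of b)⁻¹ * of a)) * of c
         = of c * (t⁻¹ * (of b * (of a)⁻¹ * (of b)⁻¹ * of a))) : False := by
  obtain ⟨m, hm⟩ := conj_letter a a ha t hta
  obtain ⟨m', hm'⟩ := conj_letter b b hb t htb
  have ht1 : t = 1 := by
    rw [hm]
    rw [hm] at hm'
    rw [of_eq_of_ne_idx hij hm', map_one]
  rw [ht1] at htc
  simp only [inv_one, one_mul] at htc
  set z : CoprodI M := of b * (of a)⁻¹ * (of b)⁻¹ * of a with hz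
  obtain ⟨m'', hm''⟩ := conj_letter c c hc z htc
  -- z is a reduced word of length 4, but `of m''` has length ≤ 1
  have hbne : (b⁻¹ : M j) ≠ 1 := inv_ne_one.mpr hb
  have hane : (a⁻¹ : M i) ≠ 1 := inv_ne_one.mpr ha
  have hsomeij : (some i : Option ι) ≠ some j := fun hcon => hij (Option.some_injective _ hcon)
  have hsomeji : (some j : Option ι) ≠ some i := fun hcon => hij (Option.some_injective _ hcon).symm
  have hfe : (Word.empty : Word M).fstIdx = none := rfl
  set w1 : Word M := cons a Word.empty (by rw [hfe]; exact fun h => nomatch h) ha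
    with hw1
  have hf1 : w1.fstIdx = some i := rfl
  set w2 : Word M := cons b⁻¹ w1 (by rw [hf1]; exact hsomeij) hbne with hw2
  have hf2 : w2.fstIdx = some j := rfl
  set w3 : Word M := cons a⁻¹ w2 (by rw [hf2]; exact hsomeji) hane with hw3
  have hf3 : w3.fstIdx = some i := rfl
  set w4 : Word M := cons b w3 (by rw [hf3]; exact hsomeij) hb with hw4
  have hprod : w4.prod = z := by
    rw [hw4, prod_cons, hw3, prod_cons, hw2, prod_cons, hw1, prod_cons, prod_empty]
    rw [map_inv, map_inv, hz]
    group
  have hlz : Word.equiv z = w4 := by rw [← hprod, equiv_prod]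
  have hle : (Word.equiv z).toList.length ≤ 1 := by
    rw [hm'']
    exact equiv_of_length_le m''
  rw [hlz] at hle
  have h4 : w4.toList.length = 4 := rfl
  omega



end CoprodILemmas

section AutLemmas

variable {H : Type*} [Group H]

lemma aut_inv_apply (e : MulAut H) (x y : H) (h : e y = x) : e⁻¹ x = y := by
  rw [← h, ← MulAut.mul_apply, inv_mul_cancel, MulAut.one_apply]

lemma conj_mul_aut (f : MulAut H) (g : H) :
    f * MulAut.conj g * f⁻¹ = MulAut.conj (f g) := by
  ext x
  have h1 : f⁻¹ x = f.symm x := rfl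
  simp only [MulAut.mul_apply, MulAut.conj_apply, h1, map_mul, map_inv,
    MulEquiv.apply_symm_apply]

end AutLemmas

section GraphLemmas

variable {V : Type*} (Γ : SimpleGraph V)

open SimpleGraph

lemma isCompOf_transfer {S T : Set V} (c : (Γ.induce S).ConnectedComponent)
    (hCT : Subtype.val '' c.supp ⊆ T) (hTS : T ⊆ S)
    (hclosed : ∀ x ∈ Subtype.val '' c.supp, ∀ y ∈ T, Γ.Adj x y →
      y ∈ Subtype.val '' c.supp) :
    ∃ c' : (Γ.induce T).ConnectedComponent,
      Subtype.val '' c'.supp = Subtype.val '' c.supp := by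
  classical
  obtain ⟨x₀, hx₀0⟩ := c.exists_rep
  have hx₀ : (Γ.induce S).connectedComponentMk x₀ = c := hx₀0
  have hx₀C : (x₀ : V) ∈ Subtype.val '' c.supp :=
    ⟨x₀, by rw [ConnectedComponent.mem_supp_iff]; exact hx₀, rfl⟩
  have hx₀T : (x₀ : V) ∈ T := hCT hx₀C
  have hclosedS : ∀ x ∈ Subtype.val '' c.supp, ∀ y : ↥S, Γ.Adj x y.val →
      (y : V) ∈ Subtype.val '' c.supp := by
    rintro x ⟨⟨x', hxS⟩, hxc, rfl⟩ y hadj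
    refine ⟨y, ?_, rfl⟩
    rw [ConnectedComponent.mem_supp_iff] at hxc ⊢
    rw [← hxc]
    have hadj' : (Γ.induce S).Adj y ⟨x', hxS⟩ := hadj.symm
    exact (ConnectedComponent.eq).mpr hadj'.reachable
  have claim1 : ∀ (a b : ↥S) (wk : (Γ.induce S).Walk a b),
      (a : V) ∈ Subtype.val '' c.supp →
      (b : V) ∈ Subtype.val '' c.supp ∧
        ∀ (haT : (a : V) ∈ T) (hbT : (b : V) ∈ T),
          (Γ.induce T).Reachable ⟨a, haT⟩ ⟨b, hbT⟩ := by
    intro a b wk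
    induction wk with
    | nil => exact fun h => ⟨h, fun h1 h2 => Reachable.refl _⟩
    | @cons u m b' hadj q ih =>
      intro haC
      have hmC : (m : V) ∈ Subtype.val '' c.supp := hclosedS _ haC m hadj
      refine ⟨(ih hmC).1, fun haT hbT => ?_⟩
      have hmT : (m : V) ∈ T := hCT hmC
      have step : (Γ.induce T).Adj ⟨u, haT⟩ ⟨m, hmT⟩ := hadj
      exact (step.reachable).trans ((ih hmC).2 hmT hbT)
  have claim2 : ∀ (a b : ↥T) (wk : (Γ.induce T).Walk a b),
      (a : V) ∈ Subtype.val '' c.supp → (b : V) ∈ Subtype.val '' c.supp := by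
    intro a b wk
    induction wk with
    | nil => exact id
    | @cons u m b' hadj q ih =>
      intro haC
      exact ih (hclosed _ haC _ m.2 hadj)
  refine ⟨(Γ.induce T).connectedComponentMk ⟨x₀, hx₀T⟩, ?_⟩
  ext y
  constructor
  · rintro ⟨⟨y', hyT⟩, hyc, rfl⟩
    rw [ConnectedComponent.mem_supp_iff] at hyc
    have hreach : (Γ.induce T).Reachable ⟨x₀, hx₀T⟩ ⟨y', hyT⟩ :=
      ((ConnectedComponent.eq).mp hyc).symm
    obtain ⟨wk⟩ := hreach
    exact claim2 _ _ wk hx₀C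
  · rintro ⟨y', hyc, rfl⟩
    have hyC : (y' : V) ∈ Subtype.val '' c.supp := ⟨y', hyc, rfl⟩
    have hyT : (y' : V) ∈ T := hCT hyC
    have hmk : (Γ.induce S).connectedComponentMk x₀ =
        (Γ.induce S).connectedComponentMk y' := by
      rw [hx₀]
      exact (ConnectedComponent.mem_supp_iff _ _).mp hyc |>.symm
    obtain ⟨wk⟩ := (ConnectedComponent.eq).mp hmk
    refine ⟨⟨y', hyT⟩, ?_, rfl⟩
    rw [ConnectedComponent.mem_supp_iff]
    exact ((ConnectedComponent.eq).mpr ((claim1 _ _ wk hx₀C).2 hx₀T hyT)).symm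

end GraphLemmas

end SILAux


namespace ArXiv

universe u uG

variable {V : Type u}

variable (Γ : SimpleGraph V) (G : V → Type uG) [∀ v, Group (G v)]

/-- If `Γ` has a SIL, then some two partial conjugations have a
commutator which is not inner; in particular `Out^pc(G_Γ)` is not abelian. -/
theorem SIL_commutator_not_inner {V : Type u} [Finite V] (Γ : SimpleGraph V)
    (G : V → Type uG) [∀ v, Group (G v)] [∀ v, Nontrivial (G v)]
    (gen : ∀ v, G v) (hgen : ∀ v, Subgroup.zpowers (gen v) = ⊤)
    (πfam : TV Γ → MulAut (GraphProduct Γ G))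
    (hπ : ∀ p : TV Γ, IsPartialConj Γ G gen (πfam p) p.1.1 p.1.2)
    [hNi : (((MulAut.conj : GraphProduct Γ G →* MulAut (GraphProduct Γ G)).range).subgroupOf
      (Subgroup.closure (Set.range πfam))).Normal]
    (hsil : HasSIL Γ) :
    (∃ p q : TV Γ,
      ⁅πfam p, πfam q⁆ ∉
        (MulAut.conj : GraphProduct Γ G →* MulAut (GraphProduct Γ G)).range) ∧
    ∃ a b : ↥(Subgroup.closure (Set.range πfam)) ⧸
        ((MulAut.conj : GraphProduct Γ G →* MulAut (GraphProduct Γ G)).range).subgroupOf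
          (Subgroup.closure (Set.range πfam)),
      a * b ≠ b * a := by
  classical
  obtain ⟨v, w, hvw, hnadj, C, ⟨c, hC⟩, hvC, hwC⟩ := hsil
  -- basic membership facts
  have hvL : v ∈ ((Γ.neighborSet v ∩ Γ.neighborSet w)ᶜ : Set V) := fun hmem => Γ.irrefl hmem.1
  have hwL : w ∈ ((Γ.neighborSet v ∩ Γ.neighborSet w)ᶜ : Set V) := fun hmem => hnadj hmem.1
  have hCL : C ⊆ ((Γ.neighborSet v ∩ Γ.neighborSet w)ᶜ : Set V) := by
    rw [hC]; rintro x ⟨x', _, rfl⟩; exact x'.2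
  have hmkC : ∀ (x : V) (hx : x ∈ ((Γ.neighborSet v ∩ Γ.neighborSet w)ᶜ : Set V)),
      (Γ.induce ((Γ.neighborSet v ∩ Γ.neighborSet w)ᶜ : Set V)).connectedComponentMk ⟨x, hx⟩ = c → x ∈ C := by
    intro x hx hmk
    rw [hC]
    exact ⟨⟨x, hx⟩, (SimpleGraph.ConnectedComponent.mem_supp_iff _ _).mpr hmk, rfl⟩
  have hCmk : ∀ x ∈ C, ∃ hx : x ∈ ((Γ.neighborSet v ∩ Γ.neighborSet w)ᶜ : Set V),
      (Γ.induce ((Γ.neighborSet v ∩ Γ.neighborSet w)ᶜ : Set V)).connectedComponentMk ⟨x, hx⟩ = c := by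
    intro x hx
    rw [hC] at hx
    obtain ⟨⟨x', hx'⟩, hmk, rfl⟩ := hx
    exact ⟨hx', (SimpleGraph.ConnectedComponent.mem_supp_iff _ _).mp hmk⟩
  -- C avoids the stars of v and w
  have hCstv : ∀ x ∈ C, x ∉ star Γ v := by
    intro x hx hst
    obtain ⟨hxL, hmk⟩ := hCmk x hx
    rcases hst with rfl | hadj
    · exact hvC hx
    · apply hvC
      refine hmkC v hvL ?_
      rw [← hmk]
      exact SimpleGraph.ConnectedComponent.eq.mpr
        (SimpleGraph.Adj.reachable (by exact hadj : (Γ.induce ((Γ.neighborSet v ∩ Γ.neighborSet w)ᶜ : Set V)).Adj ⟨v, hvL⟩ ⟨x, hxL⟩))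
  have hCstw : ∀ x ∈ C, x ∉ star Γ w := by
    intro x hx hst
    obtain ⟨hxL, hmk⟩ := hCmk x hx
    rcases hst with rfl | hadj
    · exact hwC hx
    · apply hwC
      refine hmkC w hwL ?_
      rw [← hmk]
      exact SimpleGraph.ConnectedComponent.eq.mpr
        (SimpleGraph.Adj.reachable (by exact hadj : (Γ.induce ((Γ.neighborSet v ∩ Γ.neighborSet w)ᶜ : Set V)).Adj ⟨w, hwL⟩ ⟨x, hxL⟩))
  -- C is a component of the complement of star v, and of star w
  have hTSv : (star Γ v)ᶜ ⊆ ((Γ.neighborSet v ∩ Γ.neighborSet w)ᶜ : Set V) := fun y hy hmem => hy (Or.inr hmem.1)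
  have hTSw : (star Γ w)ᶜ ⊆ ((Γ.neighborSet v ∩ Γ.neighborSet w)ᶜ : Set V) := fun y hy hmem => hy (Or.inr hmem.2)
  have hclosedv : ∀ x ∈ C, ∀ y ∈ (star Γ v)ᶜ, Γ.Adj x y → y ∈ C := by
    intro x hx y hy hadj
    obtain ⟨hxL, hmk⟩ := hCmk x hx
    refine hmkC y (hTSv hy) ?_
    rw [← hmk]
    exact SimpleGraph.ConnectedComponent.eq.mpr
      (SimpleGraph.Adj.reachable
        (by exact hadj.symm : (Γ.induce ((Γ.neighborSet v ∩ Γ.neighborSet w)ᶜ : Set V)).Adj ⟨y, hTSv hy⟩ ⟨x, hxL⟩))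
  have hclosedw : ∀ x ∈ C, ∀ y ∈ (star Γ w)ᶜ, Γ.Adj x y → y ∈ C := by
    intro x hx y hy hadj
    obtain ⟨hxL, hmk⟩ := hCmk x hx
    refine hmkC y (hTSw hy) ?_
    rw [← hmk]
    exact SimpleGraph.ConnectedComponent.eq.mpr
      (SimpleGraph.Adj.reachable
        (by exact hadj.symm : (Γ.induce ((Γ.neighborSet v ∩ Γ.neighborSet w)ᶜ : Set V)).Adj ⟨y, hTSw hy⟩ ⟨x, hxL⟩))
  obtain ⟨cv, hcv⟩ := SILAux.isCompOf_transfer Γ c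
    (by rw [← hC]; exact fun x hx => hCstv x hx) hTSv
    (by rw [← hC]; exact hclosedv)
  obtain ⟨cw, hcw⟩ := SILAux.isCompOf_transfer Γ c
    (by rw [← hC]; exact fun x hx => hCstw x hx) hTSw
    (by rw [← hC]; exact hclosedw)
  rw [← hC] at hcv hcw
  -- the component D of v in the complement of star w
  have hvT : v ∈ (star Γ w)ᶜ := by
    intro hmem
    rcases hmem with rfl | hadj
    · exact hvw rfl
    · exact hnadj hadj.symm
  set D : Set V :=
    Subtype.val '' ((Γ.induce (star Γ w)ᶜ).connectedComponentMk ⟨v, hvT⟩).supp with hDdef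
  have hvD : v ∈ D :=
    ⟨⟨v, hvT⟩, (SimpleGraph.ConnectedComponent.mem_supp_iff _ _).mpr rfl, rfl⟩
  have hwD : w ∉ D := by
    rintro ⟨⟨w', hw'⟩, -, hww⟩
    have hww' : w' = w := hww
    subst hww'
    exact hw' (Set.mem_insert _ _)
  have hdisj : ∀ u ∈ C, u ∉ D := by
    intro u huC huD
    obtain ⟨⟨u1, hu1⟩, hmk1, rfl⟩ := huD
    rw [SimpleGraph.ConnectedComponent.mem_supp_iff] at hmk1
    have huC' := huC
    rw [hcw.symm] at huC'
    obtain ⟨⟨u2, hu2⟩, hmk2, hval⟩ := huC'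
    rw [SimpleGraph.ConnectedComponent.mem_supp_iff] at hmk2
    have hsub : (⟨u2, hu2⟩ : ↥(star Γ w)ᶜ) = ⟨u1, hu1⟩ := Subtype.ext hval
    rw [hsub] at hmk2
    apply hvC
    rw [← hcw]
    exact ⟨⟨v, hvT⟩,
      (SimpleGraph.ConnectedComponent.mem_supp_iff _ _).mpr (by rw [← hmk1, hmk2]), rfl⟩
  -- a base point of C
  obtain ⟨x₀, hx₀⟩ := c.exists_rep
  set u₀ : V := (x₀ : V) with hu₀def
  have hu₀C : u₀ ∈ C := by
    rw [hC]
    exact ⟨x₀, (SimpleGraph.ConnectedComponent.mem_supp_iff _ _).mpr hx₀, rfl⟩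
  have hu₀v : u₀ ≠ v := fun h => hvC (h ▸ hu₀C)
  have hu₀w : u₀ ≠ w := fun h => hwC (h ▸ hu₀C)
  have hadjvu : ¬ Γ.Adj v u₀ := fun h => hCstv u₀ hu₀C (Or.inr h)
  have hadjwu : ¬ Γ.Adj w u₀ := fun h => hCstw u₀ hu₀C (Or.inr h)
  -- the two partial conjugations
  set p : TV Γ := ⟨(v, C), ⟨cv, hcv.symm⟩⟩ with hpdef
  set q : TV Γ := ⟨(w, D), ⟨_, hDdef⟩⟩ with hqdef
  set π : MulAut (GraphProduct Γ G) := πfam p with hπdef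
  set σ : MulAut (GraphProduct Γ G) := πfam q with hσdef
  obtain ⟨hπ1, hπ2⟩ := hπ p
  obtain ⟨hσ1, hσ2⟩ := hπ q
  set a : GraphProduct Γ G := of Γ G (gen v) with hadef
  set b : GraphProduct Γ G := of Γ G (gen w) with hbdef
  set z : GraphProduct Γ G := b * a⁻¹ * b⁻¹ * a with hzdef
  have hπa : π a = a := hπ2 v hvC (gen v)
  have hπb : π b = b := hπ2 w hwC (gen w)
  have hσb : σ b = b := hσ2 w hwD (gen w)
  have hσa : σ a = b * a * b⁻¹ := hσ1 v hvD (gen v)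
  have hπinv1 : ∀ u (hu : u ∈ C) (g : G u), π⁻¹ (of Γ G g) = a⁻¹ * of Γ G g * a := by
    intro u hu g
    refine SILAux.aut_inv_apply π _ _ ?_
    rw [map_mul, map_mul, map_inv, hπa, hπ1 u hu g]
    group
  have hπinv2 : ∀ u (hu : u ∉ C) (g : G u), π⁻¹ (of Γ G g) = of Γ G g :=
    fun u hu g => SILAux.aut_inv_apply π _ _ (hπ2 u hu g)
  have hσinv1 : ∀ u (hu : u ∈ D) (g : G u), σ⁻¹ (of Γ G g) = b⁻¹ * of Γ G g * b := by
    intro u hu g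
    refine SILAux.aut_inv_apply σ _ _ ?_
    rw [map_mul, map_mul, map_inv, hσb, hσ1 u hu g]
    group
  have hσinv2 : ∀ u (hu : u ∉ D) (g : G u), σ⁻¹ (of Γ G g) = of Γ G g :=
    fun u hu g => SILAux.aut_inv_apply σ _ _ (hσ2 u hu g)
  have hKdef : ∀ x : GraphProduct Γ G, ⁅π, σ⁆ x = π (σ (π⁻¹ (σ⁻¹ x))) := fun _ => rfl
  -- action of the commutator on the generators
  have hK1 : ∀ u (hu : u ∈ C) (g : G u),
      ⁅π, σ⁆ (of Γ G g) = z * of Γ G g * z⁻¹ := by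
    intro u hu g
    have huD : u ∉ D := hdisj u hu
    rw [hKdef, hσinv2 u huD g, hπinv1 u hu g]
    simp only [map_mul, map_inv, hσa, (show σ (of Γ G g) = of Γ G g from hσ2 u huD g), hσb, hπa, hπb,
      (show π (of Γ G g) = a * of Γ G g * a⁻¹ from hπ1 u hu g)]
    rw [hzdef]
    group
  have hK2 : ∀ u (hu : u ∉ C) (g : G u), ⁅π, σ⁆ (of Γ G g) = of Γ G g := by
    intro u hu g
    have hπinvb : π⁻¹ b = b := SILAux.aut_inv_apply π b b hπb
    by_cases huD : u ∈ D
    · rw [hKdef, hσinv1 u huD g]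
      simp only [map_mul, map_inv, hπinvb, hπinv2 u hu g, hσb, (show σ (of Γ G g) = b * of Γ G g * b⁻¹ from hσ1 u huD g),
        hπb, (show π (of Γ G g) = of Γ G g from hπ2 u hu g)]
      group
    · rw [hKdef, hσinv2 u huD g, hπinv2 u hu g, hσ2 u huD g, hπ2 u hu g]
  -- the free product on the three relevant vertices
  have hSnadj : ∀ x ∈ ({v, w, u₀} : Set V), ∀ y ∈ ({v, w, u₀} : Set V), ¬ Γ.Adj x y := by
    intro x hx y hy hadj
    simp only [Set.mem_insert_iff, Set.mem_singleton_iff] at hx hy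
    rcases hx with rfl | rfl | rfl <;> rcases hy with rfl | rfl | rfl <;>
      first
        | exact Γ.irrefl hadj
        | exact hnadj hadj
        | exact hnadj hadj.symm
        | exact hadjvu hadj
        | exact hadjvu hadj.symm
        | exact hadjwu hadj
        | exact hadjwu hadj.symm
  set S : Set V := {v, w, u₀} with hSdef
  have hvS : v ∈ S := Or.inl rfl
  have hwS : w ∈ S := Or.inr (Or.inl rfl)
  have huS : u₀ ∈ S := Or.inr (Or.inr rfl)
  set fam : ∀ u : V, G u →* Monoid.CoprodI (fun x : ↥S => G x.val) :=
    fun u => if hu : u ∈ S then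
      (Monoid.CoprodI.of (M := fun x : ↥S => G x.val) (i := ⟨u, hu⟩)) else 1
    with hfamdef
  have hfam_of : ∀ (u) (hu : u ∈ S) (g : G u),
      fam u g = Monoid.CoprodI.of (M := fun x : ↥S => G x.val) (i := ⟨u, hu⟩) g := by
    intro u hu g
    rw [hfamdef]
    simp only [dif_pos hu]
  have hfam_not : ∀ (u) (hu : u ∉ S) (g : G u), fam u g = 1 := by
    intro u hu g
    rw [hfamdef]
    simp only [dif_neg hu]
    rfl
  set φ₀ : Monoid.CoprodI G →* Monoid.CoprodI (fun x : ↥S => G x.val) :=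
    Monoid.CoprodI.lift fam with hφ₀def
  have hrels : rels Γ G ⊆ ↑φ₀.ker := by
    rintro r ⟨x, y, hadj, g, k, rfl⟩
    have hcomm : Commute (fam x g) (fam y k) := by
      by_cases hx : x ∈ S
      · by_cases hy : y ∈ S
        · exact absurd hadj (hSnadj x hx y hy)
        · rw [hfam_not y hy k]; exact Commute.one_right _
      · rw [hfam_not x hx g]; exact Commute.one_left _
    have heval : φ₀ (CoprodI.of g * CoprodI.of k * (CoprodI.of g)⁻¹ * (CoprodI.of k)⁻¹)
        = fam x g * fam y k * (fam x g)⁻¹ * (fam y k)⁻¹ := by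
      simp only [map_mul, map_inv, hφ₀def, Monoid.CoprodI.lift_of]
    rw [SetLike.mem_coe, MonoidHom.mem_ker, heval,
      ← commutatorElement_def, commutatorElement_eq_one_iff_commute]
    exact hcomm
  set φ : GraphProduct Γ G →* Monoid.CoprodI (fun x : ↥S => G x.val) :=
    QuotientGroup.lift (Subgroup.normalClosure (rels Γ G)) φ₀
      (fun x hx => MonoidHom.mem_ker.mp
        (Subgroup.normalClosure_le_normal hrels hx)) with hφdef
  have hφof : ∀ (u) (hu : u ∈ S) (g : G u),
      φ (of Γ G g) = Monoid.CoprodI.of (M := fun x : ↥S => G x.val) (i := ⟨u, hu⟩) g := by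
    intro u hu g
    have h0 : φ (of Γ G g) = φ₀ (CoprodI.of g) := rfl
    rw [h0, hφ₀def, Monoid.CoprodI.lift_of]
    exact hfam_of u hu g
  have hgen1 : ∀ u : V, gen u ≠ 1 := by
    intro u h1
    have h2 := hgen u
    rw [h1, Subgroup.zpowers_one_eq_bot] at h2
    obtain ⟨x, hx⟩ := exists_ne (1 : G u)
    have hxmem : x ∈ (⊥ : Subgroup (G u)) := h2 ▸ Subgroup.mem_top x
    exact hx (Subgroup.mem_bot.mp hxmem)
  set iv : ↥S := ⟨v, hvS⟩ with hivdef
  set iw : ↥S := ⟨w, hwS⟩ with hiwdef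
  set iu : ↥S := ⟨u₀, huS⟩ with hiudef
  have hij : iv ≠ iw := fun hcon => hvw (congrArg Subtype.val hcon)
  have hik : iv ≠ iu := fun hcon => hu₀v (congrArg Subtype.val hcon).symm
  have hjk : iw ≠ iu := fun hcon => hu₀w (congrArg Subtype.val hcon).symm
  have hφa : φ a = Monoid.CoprodI.of (M := fun x : ↥S => G x.val) (i := iv) (gen v) :=
    hφof v hvS (gen v)
  have hφb : φ b = Monoid.CoprodI.of (M := fun x : ↥S => G x.val) (i := iw) (gen w) :=
    hφof w hwS (gen w)
  have hφu : φ (of Γ G (gen u₀))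
      = Monoid.CoprodI.of (M := fun x : ↥S => G x.val) (i := iu) (gen u₀) :=
    hφof u₀ huS (gen u₀)
  -- the key fact: the commutator is not inner
  have key : ⁅πfam p, πfam q⁆ ∉
      (MulAut.conj : GraphProduct Γ G →* MulAut (GraphProduct Γ G)).range := by
    rintro ⟨h, hh⟩
    have hhx : ∀ x : GraphProduct Γ G, h * x * h⁻¹ = ⁅π, σ⁆ x := by
      intro x
      rw [← MulAut.conj_apply h x, hh, hπdef, hσdef]
    have e1v : h * a = a * h := by
      have e := hhx a
      rw [hK2 v hvC (gen v)] at e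
      calc h * a = (h * a * h⁻¹) * h := by group
        _ = a * h := by rw [e]
    have e1w : h * b = b * h := by
      have e := hhx b
      rw [hK2 w hwC (gen w)] at e
      calc h * b = (h * b * h⁻¹) * h := by group
        _ = b * h := by rw [e]
    have e2 : (h⁻¹ * z) * of Γ G (gen u₀) = of Γ G (gen u₀) * (h⁻¹ * z) := by
      have e := hhx (of Γ G (gen u₀))
      rw [hK1 u₀ hu₀C (gen u₀)] at e
      calc (h⁻¹ * z) * of Γ G (gen u₀)
          = h⁻¹ * (z * of Γ G (gen u₀) * z⁻¹) * z := by group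
        _ = h⁻¹ * (h * of Γ G (gen u₀) * h⁻¹) * z := by rw [← e]
        _ = of Γ G (gen u₀) * (h⁻¹ * z) := by group
    have hφz : φ z = Monoid.CoprodI.of (M := fun x : ↥S => G x.val) (i := iw) (gen w)
        * (Monoid.CoprodI.of (M := fun x : ↥S => G x.val) (i := iv) (gen v))⁻¹
        * (Monoid.CoprodI.of (M := fun x : ↥S => G x.val) (i := iw) (gen w))⁻¹
        * Monoid.CoprodI.of (M := fun x : ↥S => G x.val) (i := iv) (gen v) := by
      rw [hzdef]
      simp only [map_mul, map_inv, hφa, hφb]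
    have ht1 : φ h * Monoid.CoprodI.of (M := fun x : ↥S => G x.val) (i := iv) (gen v)
        = Monoid.CoprodI.of (M := fun x : ↥S => G x.val) (i := iv) (gen v) * φ h := by
      have e3 := congrArg φ e1v
      simp only [map_mul, hφa] at e3
      exact e3
    have ht2 : φ h * Monoid.CoprodI.of (M := fun x : ↥S => G x.val) (i := iw) (gen w)
        = Monoid.CoprodI.of (M := fun x : ↥S => G x.val) (i := iw) (gen w) * φ h := by
      have e3 := congrArg φ e1w
      simp only [map_mul, hφb] at e3
      exact e3
    have ht3 : ((φ h)⁻¹ *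
          (Monoid.CoprodI.of (M := fun x : ↥S => G x.val) (i := iw) (gen w)
          * (Monoid.CoprodI.of (M := fun x : ↥S => G x.val) (i := iv) (gen v))⁻¹
          * (Monoid.CoprodI.of (M := fun x : ↥S => G x.val) (i := iw) (gen w))⁻¹
          * Monoid.CoprodI.of (M := fun x : ↥S => G x.val) (i := iv) (gen v)))
          * Monoid.CoprodI.of (M := fun x : ↥S => G x.val) (i := iu) (gen u₀)
        = Monoid.CoprodI.of (M := fun x : ↥S => G x.val) (i := iu) (gen u₀) *
          ((φ h)⁻¹ *
          (Monoid.CoprodI.of (M := fun x : ↥S => G x.val) (i := iw) (gen w)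
          * (Monoid.CoprodI.of (M := fun x : ↥S => G x.val) (i := iv) (gen v))⁻¹
          * (Monoid.CoprodI.of (M := fun x : ↥S => G x.val) (i := iw) (gen w))⁻¹
          * Monoid.CoprodI.of (M := fun x : ↥S => G x.val) (i := iv) (gen v))) := by
      have e3 := congrArg φ e2
      simp only [map_mul, map_inv, hφz, hφu] at e3
      exact e3
    exact SILAux.coprodI_contradiction hij hik hjk
      (hgen1 v) (hgen1 w) (hgen1 u₀) (φ h) ht1 ht2 ht3
  refine ⟨⟨p, q, key⟩, ?_⟩
  set P := Subgroup.closure (Set.range πfam) with hPdef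
  have hpP : πfam p ∈ P := Subgroup.subset_closure ⟨p, rfl⟩
  have hqP : πfam q ∈ P := Subgroup.subset_closure ⟨q, rfl⟩
  refine ⟨QuotientGroup.mk ⟨πfam p, hpP⟩, QuotientGroup.mk ⟨πfam q, hqP⟩, ?_⟩
  intro hcomm
  apply key
  have hcomm' : (QuotientGroup.mk ((⟨πfam p, hpP⟩ : P) * ⟨πfam q, hqP⟩) :
        ↥P ⧸ ((MulAut.conj : GraphProduct Γ G →* MulAut (GraphProduct Γ G)).range).subgroupOf P)
      = QuotientGroup.mk ((⟨πfam q, hqP⟩ : P) * ⟨πfam p, hpP⟩) := by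
    rw [QuotientGroup.mk_mul, QuotientGroup.mk_mul]
    exact hcomm
  rw [QuotientGroup.eq, Subgroup.mem_subgroupOf] at hcomm'
  obtain ⟨g, hg⟩ := hcomm'
  have hval : (((⟨πfam p, hpP⟩ : P) * ⟨πfam q, hqP⟩)⁻¹ *
      ((⟨πfam q, hqP⟩ : P) * ⟨πfam p, hpP⟩) : P).val
      = (πfam p * πfam q)⁻¹ * (πfam q * πfam p) := rfl
  rw [hval] at hg
  refine ⟨(πfam p * πfam q) g⁻¹, ?_⟩
  calc MulAut.conj ((πfam p * πfam q) g⁻¹)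
      = (πfam p * πfam q) * MulAut.conj g⁻¹ * (πfam p * πfam q)⁻¹ :=
        (SILAux.conj_mul_aut (πfam p * πfam q) g⁻¹).symm
    _ = (πfam p * πfam q) * (MulAut.conj g)⁻¹ * (πfam p * πfam q)⁻¹ := by rw [map_inv]
    _ = (πfam p * πfam q) * ((πfam p * πfam q)⁻¹ * (πfam q * πfam p))⁻¹
        * (πfam p * πfam q)⁻¹ := by rw [hg]
    _ = ⁅πfam p, πfam q⁆ := by rw [commutatorElement_def]; group

end ArXiv
end

section
/- Let Γ be a finite simplicial graph with no SIL. Then Γ is either connected or the disjoint union of two complete graphs. Equivalently: (a) if Γ has at least three connected components then Γ has a SIL, and (b) if Γ has exactly two connected components, one of which is not a complete graph, then Γ has a SIL. -/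
open Monoid

namespace ArXiv

universe u uG

variable {V : Type u}

variable (Γ : SimpleGraph V) (G : V → Type uG) [∀ v, Group (G v)]

private lemma three_le_card_of {α : Type*} [Finite α] {a b c : α}
    (hab : a ≠ b) (hac : a ≠ c) (hbc : b ≠ c) : 3 ≤ Nat.card α := by
  haveI := Fintype.ofFinite α
  haveI := Classical.decEq α
  rw [Nat.card_eq_fintype_card]
  calc 3 = ({a, b, c} : Finset α).card := by
        rw [Finset.card_insert_of_notMem (by simp [hab, hac]),
            Finset.card_insert_of_notMem (by simp [hbc]), Finset.card_singleton]
    _ ≤ _ := Finset.card_le_univ _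

private lemma exists_three_of_card {α : Type*} [Finite α] (h : 3 ≤ Nat.card α) :
    ∃ a b c : α, a ≠ b ∧ a ≠ c ∧ b ≠ c := by
  haveI := Fintype.ofFinite α
  haveI := Classical.decEq α
  rw [Nat.card_eq_fintype_card] at h
  have h1 : 1 < Fintype.card α := by omega
  obtain ⟨a, b, hab⟩ := Fintype.exists_pair_of_one_lt_card h1
  have h2 : ({a, b} : Finset α).card ≤ 2 :=
    (Finset.card_insert_le _ _).trans (by simp)
  have hne : ({a, b} : Finset α) ≠ Finset.univ := fun hu => by
    rw [hu, Finset.card_univ] at h2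
    omega
  obtain ⟨c, _, hc⟩ := Finset.exists_of_ssubset (Finset.ssubset_univ_iff.mpr hne)
  simp only [Finset.mem_insert, Finset.mem_singleton, not_or] at hc
  exact ⟨a, b, c, hab, fun h => hc.1 h.symm, fun h => hc.2 h.symm⟩

private lemma hasSIL_of_aux (Γ : SimpleGraph V) {v w x : V} (hvw : v ≠ w)
    (hadj : ¬ Γ.Adj v w) (hxv : ¬ Γ.Reachable x v) (hxw : ¬ Γ.Reachable x w) :
    HasSIL Γ := by
  set S : Set V := (Γ.neighborSet v ∩ Γ.neighborSet w)ᶜ with hS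
  have hxS : x ∈ S := by
    intro hmem
    exact hxv (Γ.adj_symm hmem.1).reachable
  have key : ∀ y ∈ Subtype.val ''
      ((Γ.induce S).connectedComponentMk ⟨x, hxS⟩).supp, Γ.Reachable y x := by
    rintro y ⟨⟨y, hy⟩, hmem, rfl⟩
    rw [SimpleGraph.ConnectedComponent.mem_supp_iff] at hmem
    have hr : (Γ.induce S).Reachable ⟨y, hy⟩ ⟨x, hxS⟩ :=
      SimpleGraph.ConnectedComponent.exact hmem
    have := hr.map (SimpleGraph.Hom.comap (Subtype.val : S → V) Γ)
    simpa using this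
  exact ⟨v, w, hvw, hadj,
    Subtype.val '' ((Γ.induce S).connectedComponentMk ⟨x, hxS⟩).supp,
    ⟨_, rfl⟩, fun hv => hxv (key v hv).symm, fun hw => hxw (key w hw).symm⟩

/-- A finite graph with no SIL is either connected (preconnected, to
allow the empty graph) or the disjoint union of two complete graphs. Equivalently:
(a) a graph with at least three connected components has a SIL, and (b) a graph with
exactly two connected components, one of which is not complete, has a SIL. -/
theorem no_SIL_connected_or_two_complete {V : Type u} [Finite V] (Γ : SimpleGraph V) :
    (¬ HasSIL Γ →
      Γ.Preconnected ∨
        ∃ A : Set V, A.Nonempty ∧ Aᶜ.Nonempty ∧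
          (∀ a ∈ A, ∀ b ∈ A, a ≠ b → Γ.Adj a b) ∧
          (∀ a ∈ Aᶜ, ∀ b ∈ Aᶜ, a ≠ b → Γ.Adj a b) ∧
          (∀ a ∈ A, ∀ b ∈ Aᶜ, ¬ Γ.Adj a b)) ∧
    (3 ≤ Nat.card Γ.ConnectedComponent → HasSIL Γ) ∧
    (Nat.card Γ.ConnectedComponent = 2 →
      ∀ c : Γ.ConnectedComponent,
        (¬ ∀ a ∈ c.supp, ∀ b ∈ c.supp, a ≠ b → Γ.Adj a b) → HasSIL Γ) := by
  have part2 : 3 ≤ Nat.card Γ.ConnectedComponent → HasSIL Γ := by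
    intro h
    obtain ⟨c1, c2, c3, h12, h13, h23⟩ := exists_three_of_card h
    obtain ⟨v, hv⟩ := c1.exists_rep
    obtain ⟨w, hw⟩ := c2.exists_rep
    obtain ⟨x, hx⟩ := c3.exists_rep
    refine hasSIL_of_aux Γ (v := v) (w := w) (x := x) ?_ ?_ ?_ ?_
    · rintro rfl
      exact h12 (hv.symm.trans hw)
    · intro h'
      exact h12 ((hv.symm.trans (SimpleGraph.ConnectedComponent.sound h'.reachable)).trans hw)
    · intro h'
      exact h13 ((hv.symm.trans (SimpleGraph.ConnectedComponent.sound h'.symm)).trans hx)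
    · intro h'
      exact h23 ((hw.symm.trans (SimpleGraph.ConnectedComponent.sound h'.symm)).trans hx)
  have part3 : Nat.card Γ.ConnectedComponent = 2 →
      ∀ c : Γ.ConnectedComponent,
        (¬ ∀ a ∈ c.supp, ∀ b ∈ c.supp, a ≠ b → Γ.Adj a b) → HasSIL Γ := by
    intro h2 c hc
    push_neg at hc
    obtain ⟨a, ha, b, hb, hab, hnadj⟩ := hc
    rw [SimpleGraph.ConnectedComponent.mem_supp_iff] at ha hb
    obtain ⟨d, hd⟩ : ∃ d : Γ.ConnectedComponent, d ≠ c := by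
      by_contra hcon
      push_neg at hcon
      haveI : Unique Γ.ConnectedComponent := ⟨⟨c⟩, hcon⟩
      rw [Nat.card_unique] at h2
      omega
    obtain ⟨x, hx⟩ := d.exists_rep
    refine hasSIL_of_aux Γ (x := x) hab hnadj ?_ ?_
    · intro h'
      exact hd ((hx.symm.trans (SimpleGraph.ConnectedComponent.sound h')).trans ha)
    · intro h'
      exact hd ((hx.symm.trans (SimpleGraph.ConnectedComponent.sound h')).trans hb)
  refine ⟨?_, part2, part3⟩
  intro hnot
  have hlt : Nat.card Γ.ConnectedComponent < 3 := by
    by_contra hcon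
    exact hnot (part2 (by omega))
  rcases lt_or_ge (Nat.card Γ.ConnectedComponent) 2 with h | h
  · left
    haveI := Fintype.ofFinite Γ.ConnectedComponent
    rw [Nat.card_eq_fintype_card] at h
    haveI : Subsingleton Γ.ConnectedComponent :=
      Fintype.card_le_one_iff_subsingleton.mp (by omega)
    intro u v'
    exact SimpleGraph.ConnectedComponent.exact (Subsingleton.elim _ _)
  · have h2 : Nat.card Γ.ConnectedComponent = 2 := by omega
    right
    obtain ⟨c, d, hcd⟩ : ∃ c d : Γ.ConnectedComponent, c ≠ d := by
      haveI := Fintype.ofFinite Γ.ConnectedComponent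
      rw [Nat.card_eq_fintype_card] at h2
      exact Fintype.exists_pair_of_one_lt_card (by omega : 1 < Fintype.card Γ.ConnectedComponent)
    have hcomp : ∀ e : Γ.ConnectedComponent,
        ∀ a ∈ e.supp, ∀ b ∈ e.supp, a ≠ b → Γ.Adj a b := by
      intro e
      by_contra he
      push_neg at he
      exact hnot (part3 h2 e (by push_neg; exact he))
    obtain ⟨vc, hvc⟩ := c.exists_rep
    obtain ⟨vd, hvd⟩ := d.exists_rep
    refine ⟨c.supp, ⟨vc, hvc⟩, ⟨vd, ?_⟩, hcomp c, ?_, ?_⟩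
    · intro hmem
      rw [SimpleGraph.ConnectedComponent.mem_supp_iff] at hmem
      exact hcd (hmem.symm.trans hvd)
    · intro a ha b hb hab
      simp only [Set.mem_compl_iff, SimpleGraph.ConnectedComponent.mem_supp_iff] at ha hb
      have heq : Γ.connectedComponentMk a = Γ.connectedComponentMk b := by
        by_contra hne
        have := three_le_card_of (a := c) (b := Γ.connectedComponentMk a)
          (c := Γ.connectedComponentMk b) (Ne.symm ha) (Ne.symm hb) hne
        omega
      exact hcomp _ a rfl b heq.symm hab
    · intro a ha b hb hadj
      simp only [Set.mem_compl_iff, SimpleGraph.ConnectedComponent.mem_supp_iff] at ha hb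
      exact hb ((SimpleGraph.ConnectedComponent.sound hadj.reachable).symm.trans ha)

end ArXiv
end
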